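/- For all primes p and all integers m ≥ 1, k ≥ 0, s ≥ 1 and 0 ≤ ℓ ≤ m·p^s, one has binom(m·p^s − ℓ, k·p^s) ≡ binom(m·p^{s−1} − ⌈ℓ/p⌉, k·p^{s−1}) (mod p^s). -/

import Mathlib

open Finset Nat Polynomial


lemma lem1 {p k j d s : ℕ} (hp : p.Prime) (hk : 1 ≤ k) (hd : d < j) (hj : j ≤ s) :
    p ^ (s + 1 - j) ∣ Nat.choose (k * p ^ s + d) j := by
  set N := k * p ^ s + d with hN
  have hp1 : 1 < p := hp.one_lt
  have hsp : s < p ^ s := Nat.lt_pow_self hp1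
  have hpsN : p ^ s ≤ N := le_trans (Nat.le_mul_of_pos_left _ hk) (Nat.le_add_right _ _)
  have hjN : j ≤ N := le_trans (le_trans hj hsp.le) hpsN
  have hb : Nat.log p N < Nat.log p N + 1 := lt_add_one _
  have hkum := Nat.Prime.emultiplicity_choose hp hjN hb
  -- the subset of carries
  have hsub : Finset.Ico (Nat.log p j + 1) (s + 1) ⊆
      {i ∈ Finset.Ico 1 (Nat.log p N + 1) | p ^ i ≤ j % p ^ i + (N - j) % p ^ i} := by
    intro i hi
    simp only [Finset.mem_Ico] at hi
    obtain ⟨hi1, hi2⟩ := hi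
    have hjpi : j < p ^ i := lt_of_lt_of_le (Nat.lt_pow_succ_log_self hp1 j)
      (Nat.pow_le_pow_right hp.pos hi1)
    have his : i ≤ s := by omega
    have hsLog : s ≤ Nat.log p N := Nat.le_log_of_pow_le hp1 hpsN
    have hmem : i ∈ Finset.Ico 1 (Nat.log p N + 1) := by
      simp only [Finset.mem_Ico]; omega
    rw [Finset.mem_filter]
    refine ⟨hmem, ?_⟩
    set e := j - d with he
    have he1 : 1 ≤ e := by omega
    have hej : e ≤ j := by omega
    have hNj : N - j = k * p ^ s - e := by omega
    have hepow : e < p ^ i := lt_of_le_of_lt hej hjpi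
    have hkey : k * p ^ s - e = p ^ i * (k * p ^ (s - i) - 1) + (p ^ i - e) := by
      have h1 : p ^ i * (k * p ^ (s - i)) = k * p ^ s := by
        rw [← mul_assoc, mul_comm (p ^ i) k, mul_assoc, ← pow_add]
        congr 2
        omega
      have h2 : 1 ≤ k * p ^ (s - i) := Nat.one_le_iff_ne_zero.mpr (by positivity)
      have h3 : p ^ i * (k * p ^ (s - i) - 1) = p ^ i * (k * p ^ (s - i)) - p ^ i :=
        by rw [Nat.mul_sub, mul_one]
      rw [h3, h1]
      have : p ^ i ≤ k * p ^ s := le_trans (Nat.le_refl _) (h1 ▸ Nat.le_mul_of_pos_right _ h2)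
      omega
    have hmod : (N - j) % p ^ i = p ^ i - e := by
      rw [hNj, hkey, Nat.mul_add_mod, Nat.mod_eq_of_lt (by omega)]
    rw [hmod, Nat.mod_eq_of_lt hjpi]
    omega
  have hcard : s + 1 - j ≤ #{i ∈ Finset.Ico 1 (Nat.log p N + 1) |
      p ^ i ≤ j % p ^ i + (N - j) % p ^ i} := by
    have := Finset.card_le_card hsub
    rw [Nat.card_Ico] at this
    have hlj : Nat.log p j < j := Nat.log_lt_self p (by omega)
    omega
  apply pow_dvd_of_le_emultiplicity
  rw [hkum]
  exact_mod_cast Nat.cast_le.mpr hcard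


lemma hXpE {p : ℕ} (hp : p.Prime) :
    ∃ E : ℤ[X], (X + 1 : ℤ[X]) ^ p = (X ^ p + 1) + (p : ℤ[X]) * E ∧
      E.coeff 0 = 0 ∧ E.natDegree ≤ p - 1 := by
  classical
  refine ⟨∑ i ∈ Finset.Ico 1 p, Polynomial.C ((p.choose i / p : ℕ) : ℤ) * X ^ i, ?_, ?_, ?_⟩
  · have hadd : (X + 1 : ℤ[X]) ^ p = ∑ i ∈ Finset.range (p + 1),
        X ^ i * 1 ^ (p - i) * (p.choose i : ℤ[X]) := add_pow X 1 p
    rw [hadd, Finset.sum_range_succ, Finset.range_eq_Ico,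
      Finset.sum_eq_sum_Ico_succ_bot hp.pos]
    simp only [one_pow, mul_one, pow_zero, one_mul, Nat.choose_self, Nat.choose_zero_right,
      Nat.cast_one]
    rw [Finset.mul_sum]
    have : ∀ i ∈ Finset.Ico 1 p, (X:ℤ[X]) ^ i * (p.choose i : ℤ[X]) =
        (p : ℤ[X]) * (Polynomial.C ((p.choose i / p : ℕ) : ℤ) * X ^ i) := by
      intro i hi
      simp only [Finset.mem_Ico] at hi
      have hdvd : p ∣ p.choose i := hp.dvd_choose_self (by omega) hi.2
      have hmul : (p : ℕ) * (p.choose i / p) = p.choose i := Nat.mul_div_cancel' hdvd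
      rw [show ((p : ℤ[X])) = Polynomial.C ((p : ℕ) : ℤ) from (Polynomial.C_eq_natCast p).symm,
        ← mul_assoc, ← Polynomial.C_mul, ← Nat.cast_mul, hmul, Polynomial.C_eq_natCast]
      ring
    rw [Finset.sum_congr rfl this]
    ring
  · rw [Polynomial.finset_sum_coeff]
    apply Finset.sum_eq_zero
    intro i hi
    simp only [Finset.mem_Ico] at hi
    rw [Polynomial.coeff_C_mul, Polynomial.coeff_X_pow, if_neg (by omega), mul_zero]
  · apply Polynomial.natDegree_sum_le_of_forall_le
    intro i hi
    simp only [Finset.mem_Ico] at hi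
    exact le_trans (Polynomial.natDegree_C_mul_le _ _)
      (le_trans (Polynomial.natDegree_X_pow_le i) (by omega))

lemma coeffProd {p : ℕ} (A : ℤ[X]) (n K : ℕ) :
    (A * ((X:ℤ[X]) ^ p + 1) ^ n).coeff K =
      ∑ i ∈ Finset.range (n + 1),
        (n.choose i : ℤ) * (if p * i ≤ K then A.coeff (K - p * i) else 0) := by
  rw [add_pow, Finset.mul_sum, Polynomial.finset_sum_coeff]
  apply Finset.sum_congr rfl
  intro i hi
  have h1 : A * (((X:ℤ[X]) ^ p) ^ i * 1 ^ (n - i) * (n.choose i : ℤ[X])) =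
      Polynomial.C ((n.choose i : ℤ)) * (A * X ^ (p * i)) := by
    rw [Polynomial.C_eq_natCast, ← pow_mul]
    ring
  rw [h1, Polynomial.coeff_C_mul, Polynomial.coeff_mul_X_pow']

lemma lemA {p : ℕ} (hp : p.Prime) (q r k s : ℕ) (hr : r < p) :
    (p : ℤ) ^ (s + 1) ∣ (Nat.choose (p * q + r) (k * p ^ (s + 1)) : ℤ) -
      (Nat.choose q (k * p ^ s) : ℤ) := by
  rcases Nat.eq_zero_or_pos k with rfl | hk
  · simp
  obtain ⟨E, hXp, hE0, hEdeg⟩ := hXpE hp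
  set K := k * p ^ (s + 1) with hK
  set K' := k * p ^ s with hK'
  have hKK' : K = p * K' := by rw [hK, hK', pow_succ]; ring
  have hpsK' : p ^ s ≤ K' := Nat.le_mul_of_pos_left _ hk
  have hsps : s < p ^ s := Nat.lt_pow_self hp.one_lt
  -- big expansion
  have hbig : ((X + 1 : ℤ[X])) ^ (p * q + r) =
      ∑ j ∈ Finset.range (q + 1),
        Polynomial.C ((q.choose j : ℤ) * (p:ℤ) ^ j) *
          (E ^ j * (X ^ p + 1) ^ (q - j) * (X + 1) ^ r) := by
    rw [pow_add, pow_mul, hXp, add_comm ((X:ℤ[X]) ^ p + 1), add_pow, Finset.sum_mul]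
    apply Finset.sum_congr rfl
    intro j hj
    simp only [Polynomial.C_mul, Polynomial.C_pow, Polynomial.C_eq_natCast]
    ring
  have hco := congrArg (fun f => Polynomial.coeff f K) hbig
  simp only [Polynomial.finset_sum_coeff, Polynomial.coeff_C_mul,
    Polynomial.coeff_X_add_one_pow] at hco
  rw [Finset.sum_range_succ'] at hco
  -- the j = 0 term
  have hj0 : (E ^ 0 * ((X:ℤ[X]) ^ p + 1) ^ (q - 0) * (X + 1) ^ r).coeff K
      = (Nat.choose q K' : ℤ) := by
    have h1 : (E ^ 0 * ((X:ℤ[X]) ^ p + 1) ^ (q - 0) * (X + 1) ^ r)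
        = ((X + 1 : ℤ[X]) ^ r) * ((X ^ p + 1) ^ q) := by rw [Nat.sub_zero]; ring
    rw [h1, coeffProd]
    rw [Finset.sum_eq_single K']
    · rw [if_pos (le_of_eq hKK'.symm), hKK', Nat.sub_self, Polynomial.coeff_X_add_one_pow,
        Nat.choose_zero_right, Nat.cast_one, mul_one]
    · intro i hi hne
      split_ifs with hpi
      · have hiK : i ≤ K' := by
          rw [hKK'] at hpi
          exact Nat.le_of_mul_le_mul_left hpi hp.pos
        have hiK' : i < K' := lt_of_le_of_ne hiK hne
        have hgt : r < K - p * i := by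
          have : p * i + p ≤ K := by
            rw [hKK']
            calc p * i + p = p * (i+1) := by ring
            _ ≤ p * K' := Nat.mul_le_mul_left _ (by omega)
          omega
        rw [Polynomial.coeff_X_add_one_pow, Nat.choose_eq_zero_of_lt hgt]
        simp
      · simp
    · intro hK'mem
      have : q < K' := by
        simp only [Finset.mem_range] at hK'mem
        omega
      rw [Nat.choose_eq_zero_of_lt this]
      simp
  rw [Nat.choose_zero_right, Nat.cast_one, one_mul, pow_zero, one_mul, hj0] at hco
  -- now hco : ↑(choose (p*q+r) K) = (∑ i ∈ range q, ...) + ↑(choose q K')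
  rw [hco, add_sub_cancel_right]
  apply Finset.dvd_sum
  intro i hi
  simp only [Finset.mem_range] at hi
  set j := i + 1 with hjdef
  have hj1 : 1 ≤ j := by omega
  have hjq : j ≤ q := by omega
  by_cases hjs : s + 1 ≤ j
  · -- p^(s+1) ∣ p^j
    apply Dvd.dvd.mul_right
    exact Dvd.dvd.mul_left (pow_dvd_pow _ hjs) _
  push_neg at hjs
  have hjs' : j ≤ s := by omega
  -- rewrite the coefficient
  have harr : (E ^ j * ((X:ℤ[X]) ^ p + 1) ^ (q - j) * (X + 1) ^ r)
      = (E ^ j * (X + 1) ^ r) * ((X ^ p + 1) ^ (q - j)) := by ring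
  rw [harr, coeffProd]
  set A := E ^ j * ((X:ℤ[X]) + 1) ^ r with hA
  have hpow : (p:ℤ) ^ (s+1) = (p:ℤ) ^ j * (p:ℤ) ^ (s + 1 - j) := by
    rw [← pow_add]; congr 1; omega
  have hmain : (p:ℤ) ^ (s + 1 - j) ∣ (q.choose j : ℤ) *
      ∑ i' ∈ Finset.range (q - j + 1),
        ((q-j).choose i' : ℤ) * (if p * i' ≤ K then A.coeff (K - p * i') else 0) := by
    rw [Finset.mul_sum]
    apply Finset.dvd_sum
    intro i' hi'
    simp only [Finset.mem_range] at hi'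
    split_ifs with hpi
    swap
    · simp
    by_cases hz : A.coeff (K - p * i') = 0
    · simp [hz]
    -- bounds on t := K - p * i'
    set t := K - p * i' with ht
    have hiK : i' ≤ K' := by
      rw [hKK'] at hpi
      exact Nat.le_of_mul_le_mul_left hpi hp.pos
    have htpc : t = p * (K' - i') := by
      rw [ht, hKK', Nat.mul_sub]
    -- lower bound j ≤ t
    have hXdvd : (X:ℤ[X]) ^ j ∣ A := by
      apply Dvd.dvd.mul_right
      exact pow_dvd_pow_of_dvd (Polynomial.X_dvd_iff.mpr hE0) j
    have htlb : j ≤ t := by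
      by_contra hcon
      push_neg at hcon
      obtain ⟨B, hB⟩ := hXdvd
      rw [hB, mul_comm, Polynomial.coeff_mul_X_pow', if_neg (by omega)] at hz
      exact hz rfl
    -- upper bound
    have hdegA : A.natDegree ≤ j * (p - 1) + r := by
      apply le_trans (Polynomial.natDegree_mul_le)
      apply Nat.add_le_add
      · exact le_trans (Polynomial.natDegree_pow_le) (Nat.mul_le_mul_left j hEdeg)
      · have hx1 : (X + 1 : ℤ[X]) = X + Polynomial.C 1 := by rw [map_one]
        apply le_trans (Polynomial.natDegree_pow_le)
        rw [hx1, Polynomial.natDegree_X_add_C]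
        omega
    have htub : t ≤ j * (p - 1) + r := by
      by_contra hcon
      push_neg at hcon
      exact hz (Polynomial.coeff_eq_zero_of_natDegree_lt (lt_of_le_of_lt hdegA hcon))
    -- c and d
    set c := K' - i' with hc
    have hc1 : 1 ≤ c := by
      rcases Nat.eq_zero_or_pos c with h0 | h1
      · rw [h0, Nat.mul_zero] at htpc; omega
      · exact h1
    have hcj : c ≤ j := by
      by_contra hcon
      push_neg at hcon
      have h2 : p * (j + 1) ≤ p * c := Nat.mul_le_mul_left _ (by omega)
      have h3 : j * (p - 1) = j * p - j := by rw [Nat.mul_sub, mul_one]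
      have h4 : j ≤ j * p := Nat.le_mul_of_pos_right _ hp.pos
      have h5 : p * (j+1) = j * p + p := by ring
      omega
    set d := j - c with hd
    have hdj : d < j := by omega
    have hcK' : c ≤ K' := by omega
    have hji : j + i' = K' + d := by omega
    have hlem := lem1 (p := p) (k := k) hp hk hdj hjs'
    rw [← hK', ← hji] at hlem
    have hcm : Nat.choose q (j + i') * Nat.choose (j + i') j
        = Nat.choose q j * Nat.choose (q - j) i' := by
      have := Nat.choose_mul (n := q) (k := j + i') (s := j) (by omega)
      simpa using this
    have hrearr : (q.choose j : ℤ) * (((q-j).choose i' : ℤ) * A.coeff t)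
        = ((Nat.choose q (j + i') * Nat.choose (j + i') j : ℕ) : ℤ) * A.coeff t := by
      rw [hcm]; push_cast; ring
    rw [hrearr]
    apply Dvd.dvd.mul_right
    have : (p:ℕ) ^ (s + 1 - j) ∣ Nat.choose q (j + i') * Nat.choose (j + i') j :=
      Dvd.dvd.mul_left hlem _
    exact_mod_cast Int.natCast_dvd_natCast.mpr this
  rw [hpow]
  calc (p:ℤ) ^ j * (p:ℤ) ^ (s + 1 - j) ∣
      (p:ℤ) ^ j * ((q.choose j : ℤ) * ∑ i' ∈ Finset.range (q - j + 1),
        ((q-j).choose i' : ℤ) * (if p * i' ≤ K then A.coeff (K - p * i') else 0)) :=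
        mul_dvd_mul_left _ hmain
    _ = (q.choose j : ℤ) * (p:ℤ) ^ j * ∑ i' ∈ Finset.range (q - j + 1),
        ((q-j).choose i' : ℤ) * (if p * i' ≤ K then A.coeff (K - p * i') else 0) := by ring

/-- For primes `p`, integers `m ≥ 1`, `k ≥ 0`, `s ≥ 1` and `0 ≤ ℓ ≤ m·p^s`,
`binom(m·p^s − ℓ, k·p^s) ≡ binom(m·p^{s−1} − ⌈ℓ/p⌉, k·p^{s−1}) (mod p^s)`.
Here `⌈ℓ/p⌉ = (ℓ + p − 1)/p` with natural division. -/
theorem choose_ceil_congruence (p m k s l : ℕ) (hp : p.Prime) (hm : 1 ≤ m) (hs : 1 ≤ s)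
    (hl : l ≤ m * p ^ s) :
    (p : ℤ) ^ s ∣ (Nat.choose (m * p ^ s - l) (k * p ^ s) : ℤ) -
      (Nat.choose (m * p ^ (s - 1) - (l + p - 1) / p) (k * p ^ (s - 1)) : ℤ) := by
  obtain ⟨s', rfl⟩ : ∃ s', s = s' + 1 := ⟨s - 1, by omega⟩
  simp only [Nat.add_sub_cancel]
  set c := (l + p - 1) / p with hc
  set M := m * p ^ s' with hM
  have hp2 : 2 ≤ p := hp.two_le
  have hdm : p * c + (l + p - 1) % p = l + p - 1 := by rw [hc]; exact Nat.div_add_mod _ _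
  have hmod : (l + p - 1) % p < p := Nat.mod_lt _ (by omega)
  have hpM : m * p ^ (s' + 1) = p * M := by rw [hM, pow_succ]; ring
  rw [hpM] at hl
  have hlc : l ≤ p * c := by omega
  have hcl : p * c ≤ l + p - 1 := by omega
  have hcM : c ≤ M := by
    by_contra hcon
    push_neg at hcon
    have h2 : p * (M + 1) ≤ p * c := Nat.mul_le_mul_left _ (by omega)
    have h3 : p * (M + 1) = p * M + p := by ring
    omega
  have heq : m * p ^ (s' + 1) - l = p * (M - c) + (p * c - l) := by
    have h4 : p * (M - c) = p * M - p * c := Nat.mul_sub p M c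
    have h5 : p * c ≤ p * M := Nat.mul_le_mul_left _ hcM
    omega
  have hrr : p * c - l < p := by omega
  rw [heq]
  exact lemA hp (M - c) (p * c - l) k s' hrr
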